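/- Let x : ℕ → ℂ be a sequence and a ∈ ℂ with |a| > 1. Let D_a be the difference operator on sequences defined by (D_a x)_0 = x_0 and (D_a x)_n = x_n − a·x_{n−1} for n ≥ 1. Suppose k ∈ ℕ is such that the sequence D_a^k x is unbounded while the sequence D_a^{k+1} x is bounded. Then the limit lim_{n→∞} x_n/(n^k · a^n) exists in ℂ and is nonzero. -/

import Mathlib

/-- The difference operator on sequences: `(Da a x) 0 = x 0` and
`(Da a x) n = x n - a * x (n-1)` for `n ≥ 1`. -/
def Da (a : ℂ) (x : ℕ → ℂ) : ℕ → ℂ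
  | 0 => x 0
  | n + 1 => x (n + 1) - a * x n

/-- A sequence of complex numbers is bounded. -/
def BoundedSeq (y : ℕ → ℂ) : Prop := ∃ M : ℝ, 0 < M ∧ ∀ n, ‖y n‖ ≤ M

open Filter Finset

lemma Da_zero (a : ℂ) (x : ℕ → ℂ) : Da a x 0 = x 0 := rfl
lemma Da_succ (a : ℂ) (x : ℕ → ℂ) (n : ℕ) : Da a x (n+1) = x (n+1) - a * x n := rfl

lemma solve_Da (a : ℂ) (ha : a ≠ 0) (z : ℕ → ℂ) (n : ℕ) :
    z n = a ^ n * ∑ i ∈ Finset.range (n+1), Da a z i / a ^ i := by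
  induction n with
  | zero => simp [Da]
  | succ n ih =>
    have h1 : a ^ (n+1) * ∑ i ∈ Finset.range (n+1), Da a z i / a ^ i = a * z n := by
      rw [ih]; ring
    rw [Finset.sum_range_succ, mul_add, mul_div_cancel₀ _ (pow_ne_zero _ ha), h1, Da_succ]
    ring

-- Faulhaber bounds
lemma pow_step_lb (j n : ℕ) :
    (j+1 : ℝ) * (n:ℝ)^j ≤ ((n:ℝ)+1)^(j+1) - (n:ℝ)^(j+1) := by
  have h := geom_sum₂_mul ((n:ℝ)+1) (n:ℝ) (j+1)
  simp only [add_sub_cancel_left, mul_one] at h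
  rw [← h]
  have : ∀ i ∈ Finset.range (j+1), (n:ℝ)^j ≤ ((n:ℝ)+1)^i * (n:ℝ)^(j+1-1-i) := by
    intro i hi
    simp only [Finset.mem_range] at hi
    have hij : i ≤ j := Nat.lt_succ_iff.mp hi
    calc (n:ℝ)^j = (n:ℝ)^i * (n:ℝ)^(j-i) := by rw [← pow_add]; congr 1; omega
    _ ≤ ((n:ℝ)+1)^i * (n:ℝ)^(j+1-1-i) := by
        have : j + 1 - 1 - i = j - i := by omega
        rw [this]
        gcongr
        linarith [Nat.cast_nonneg (α := ℝ) n]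
  calc (j+1:ℝ) * (n:ℝ)^j = ∑ _i ∈ Finset.range (j+1), (n:ℝ)^j := by
        rw [Finset.sum_const, Finset.card_range, nsmul_eq_mul]; push_cast; ring
  _ ≤ _ := Finset.sum_le_sum this

lemma pow_step_ub (j n : ℕ) :
    ((n:ℝ)+1)^(j+1) - (n:ℝ)^(j+1) ≤ (j+1 : ℝ) * ((n:ℝ)+1)^j := by
  have h := geom_sum₂_mul ((n:ℝ)+1) (n:ℝ) (j+1)
  simp only [add_sub_cancel_left, mul_one] at h
  rw [← h]
  have : ∀ i ∈ Finset.range (j+1), ((n:ℝ)+1)^i * (n:ℝ)^(j+1-1-i) ≤ ((n:ℝ)+1)^j := by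
    intro i hi
    simp only [Finset.mem_range] at hi
    have hij : i ≤ j := Nat.lt_succ_iff.mp hi
    calc ((n:ℝ)+1)^i * (n:ℝ)^(j+1-1-i) ≤ ((n:ℝ)+1)^i * ((n:ℝ)+1)^(j-i) := by
          have : j + 1 - 1 - i = j - i := by omega
          rw [this]; gcongr; linarith [Nat.cast_nonneg (α := ℝ) n]
    _ = ((n:ℝ)+1)^j := by rw [← pow_add]; congr 1; omega
  calc _ ≤ ∑ _i ∈ Finset.range (j+1), ((n:ℝ)+1)^j := Finset.sum_le_sum this
  _ = (j+1:ℝ) * ((n:ℝ)+1)^j := by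
      rw [Finset.sum_const, Finset.card_range, nsmul_eq_mul]; push_cast; ring

lemma sum_pow_ub (j n : ℕ) :
    (j+1:ℝ) * ∑ i ∈ Finset.range n, (i:ℝ)^j ≤ (n:ℝ)^(j+1) := by
  induction n with
  | zero => simp
  | succ n ih =>
    rw [Finset.sum_range_succ, mul_add]
    push_cast
    nlinarith [pow_step_lb j n]

lemma sum_pow_lb (j n : ℕ) :
    (n:ℝ)^(j+1) ≤ (j+1:ℝ) * ∑ i ∈ Finset.range n, ((i:ℝ)+1)^j := by
  induction n with
  | zero => simp
  | succ n ih =>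
    rw [Finset.sum_range_succ, mul_add]
    push_cast
    nlinarith [pow_step_ub j n]

lemma sum_pow_lb' (j n : ℕ) :
    (n:ℝ)^(j+1) ≤ (j+1:ℝ) * ∑ i ∈ Finset.range (n+1), (i:ℝ)^j := by
  refine le_trans (sum_pow_lb j n) ?_
  have he : ∑ i ∈ Finset.range n, ((i:ℝ)+1)^j ≤ ∑ i ∈ Finset.range (n+1), (i:ℝ)^j := by
    rw [Finset.sum_range_succ' (fun i => (i:ℝ)^j) n]
    have h1 : ∀ i ∈ Finset.range n, ((i:ℝ)+1)^j = (((i+1:ℕ)):ℝ)^j := by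
      intros; push_cast; ring
    rw [Finset.sum_congr rfl h1]
    have h2 : (0:ℝ) ≤ ((0:ℕ):ℝ)^j := by positivity
    linarith
  exact mul_le_mul_of_nonneg_left he (by positivity)

lemma sum_pow_ub' (j n : ℕ) :
    (j+1:ℝ) * ∑ i ∈ Finset.range (n+1), (i:ℝ)^j ≤ (n:ℝ)^(j+1) + (j+1:ℝ) * (n:ℝ)^j := by
  rw [Finset.sum_range_succ, mul_add]
  linarith [sum_pow_ub j n]

lemma faulhaber_tendsto (j : ℕ) :
    Filter.Tendsto (fun n : ℕ => (∑ i ∈ Finset.range (n+1), (i:ℝ)^j) / (n:ℝ)^(j+1))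
      Filter.atTop (nhds (1/(j+1:ℝ))) := by
  have hj : (0:ℝ) < j+1 := by positivity
  have hub : Filter.Tendsto (fun n : ℕ => 1/(j+1:ℝ) + 1/(n:ℝ)) Filter.atTop
      (nhds (1/(j+1:ℝ))) := by
    have := (tendsto_one_div_atTop_nhds_zero_nat : Filter.Tendsto (fun n : ℕ => 1/(n:ℝ)) Filter.atTop (nhds 0))
    simpa using tendsto_const_nhds.add this
  refine tendsto_of_tendsto_of_tendsto_of_le_of_le' tendsto_const_nhds hub ?_ ?_
  · filter_upwards [Filter.eventually_ge_atTop 1] with n hn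
    have hn' : (0:ℝ) < (n:ℝ) := by exact_mod_cast hn
    have hpow : (0:ℝ) < (n:ℝ)^(j+1) := by positivity
    rw [div_le_div_iff₀ hj hpow, one_mul]
    calc (n:ℝ)^(j+1) ≤ (j+1:ℝ) * ∑ i ∈ Finset.range (n+1), (i:ℝ)^j := sum_pow_lb' j n
    _ = (∑ i ∈ Finset.range (n+1), (i:ℝ)^j) * (j+1:ℝ) := by ring
  · filter_upwards [Filter.eventually_ge_atTop 1] with n hn
    have hn' : (0:ℝ) < (n:ℝ) := by exact_mod_cast hn
    have hpow : (0:ℝ) < (n:ℝ)^(j+1) := by positivity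
    rw [div_le_iff₀ hpow]
    have h2 : (j+1:ℝ) * ∑ i ∈ Finset.range (n+1), (i:ℝ)^j ≤ (n:ℝ)^(j+1) + (j+1:ℝ)*(n:ℝ)^j :=
      sum_pow_ub' j n
    have h3 : (1/(j+1:ℝ) + 1/(n:ℝ)) * (n:ℝ)^(j+1) * (j+1) =
        (n:ℝ)^(j+1) + (j+1:ℝ)*(n:ℝ)^j * ((n:ℝ)^(j+1) / ((n:ℝ)^j * n)) := by
      field_simp
    have h4 : (n:ℝ)^(j+1) / ((n:ℝ)^j * n) = 1 := by
      rw [div_eq_one_iff_eq (by positivity)]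
      rw [pow_succ]
    rw [h4, mul_one] at h3
    nlinarith [sum_pow_ub' j n]

lemma cesaro_succ (u : ℕ → ℝ) (h : Filter.Tendsto u Filter.atTop (nhds 0)) :
    Filter.Tendsto (fun n : ℕ => (∑ i ∈ Finset.range (n+1), u i) / (n:ℝ))
      Filter.atTop (nhds 0) := by
  have h1 := h.cesaro
  have h2 : Filter.Tendsto (fun n : ℕ => ((n:ℝ)+1)⁻¹ * ∑ i ∈ Finset.range (n+1), u i)
      Filter.atTop (nhds 0) := by
    refine (h1.comp (Filter.tendsto_add_atTop_nat 1)).congr (fun n => ?_)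
    show ((↑(n+1):ℝ))⁻¹ * ∑ i ∈ Finset.range (n+1), u i = _
    push_cast; ring
  have h3 : Filter.Tendsto (fun n : ℕ => ((n:ℝ)+1)/(n:ℝ)) Filter.atTop (nhds 1) := by
    have := (tendsto_one_div_atTop_nhds_zero_nat : Filter.Tendsto (fun n : ℕ => 1/(n:ℝ)) Filter.atTop (nhds 0))
    have h4 : Filter.Tendsto (fun n : ℕ => 1 + 1/(n:ℝ)) Filter.atTop (nhds 1) := by
      simpa using tendsto_const_nhds.add this
    refine h4.congr' ?_
    filter_upwards [Filter.eventually_ge_atTop 1] with n hn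
    have hn' : (0:ℝ) < (n:ℝ) := by exact_mod_cast hn
    field_simp
  have := h2.mul h3
  rw [zero_mul] at this
  refine this.congr' ?_
  filter_upwards [Filter.eventually_ge_atTop 1] with n hn
  have hn' : (0:ℝ) < (n:ℝ) := by exact_mod_cast hn
  have h5 : ((n:ℝ)+1) ≠ 0 := by positivity
  field_simp

lemma sum_lemma (j : ℕ) (u : ℕ → ℂ) (L : ℂ)
    (h : Filter.Tendsto (fun n : ℕ => u n / (n:ℂ)^j) Filter.atTop (nhds L)) :
    Filter.Tendsto (fun n : ℕ => (∑ i ∈ Finset.range (n+1), u i) / (n:ℂ)^(j+1))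
      Filter.atTop (nhds (L/((j:ℂ)+1))) := by
  set ε : ℕ → ℂ := fun i => u i / (i:ℂ)^j - L with hεdef
  have hε : Filter.Tendsto ε Filter.atTop (nhds 0) := by
    simpa using h.sub_const L
  set f : ℕ → ℂ := fun i => (i:ℂ)^j * ε i + L * (i:ℂ)^j with hfdef
  have hsplit : ∀ n, ∑ i ∈ Finset.range (n+1), u i =
      (∑ i ∈ Finset.range (n+1), (i:ℂ)^j * ε i) + L * (∑ i ∈ Finset.range (n+1), (i:ℂ)^j)
        + (u 0 - f 0) := by
    intro n
    have huf : ∀ i : ℕ, 1 ≤ i → u i = f i := by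
      intro i hi
      have hi0 : ((i:ℂ))^j ≠ 0 := by
        apply pow_ne_zero
        exact_mod_cast Nat.cast_ne_zero.mpr (by omega)
      simp only [hfdef, hεdef]
      field_simp
      ring
    have e1 : ∑ i ∈ Finset.range (n+1), u i
        = (∑ i ∈ Finset.range n, u (i+1)) + u 0 := Finset.sum_range_succ' u n
    have e2 : ∑ i ∈ Finset.range (n+1), f i
        = (∑ i ∈ Finset.range n, f (i+1)) + f 0 := Finset.sum_range_succ' f n
    have e3 : ∑ i ∈ Finset.range n, u (i+1) = ∑ i ∈ Finset.range n, f (i+1) :=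
      Finset.sum_congr rfl (fun i _ => huf (i+1) (by omega))
    have e4 : ∑ i ∈ Finset.range (n+1), f i =
        (∑ i ∈ Finset.range (n+1), (i:ℂ)^j * ε i) + L * (∑ i ∈ Finset.range (n+1), (i:ℂ)^j) := by
      rw [Finset.mul_sum, ← Finset.sum_add_distrib]
    rw [e1, e3, ← e4] at *
    rw [e2]
    ring
  -- term 2 limit
  have t2 : Filter.Tendsto
      (fun n : ℕ => L * (∑ i ∈ Finset.range (n+1), (i:ℂ)^j) / (n:ℂ)^(j+1))
      Filter.atTop (nhds (L/((j:ℂ)+1))) := by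
    have hreal := faulhaber_tendsto j
    have hc := (Complex.continuous_ofReal.tendsto _).comp hreal
    have heq : ∀ n : ℕ, ((((∑ i ∈ Finset.range (n+1), (i:ℝ)^j) / (n:ℝ)^(j+1)) : ℝ) : ℂ)
        = (∑ i ∈ Finset.range (n+1), (i:ℂ)^j) / (n:ℂ)^(j+1) := by
      intro n; push_cast; ring
    have hc2 : Filter.Tendsto (fun n : ℕ => (∑ i ∈ Finset.range (n+1), (i:ℂ)^j) / (n:ℂ)^(j+1))
        Filter.atTop (nhds ((1/((j:ℝ)+1) : ℝ) : ℂ)) := by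
      refine Filter.Tendsto.congr (fun n => heq n) ?_
      exact hc
    have := (tendsto_const_nhds (x := L)).mul hc2
    have hcast : L * ((1/((j:ℝ)+1) : ℝ) : ℂ) = L / ((j:ℂ)+1) := by push_cast; ring
    rw [hcast] at this
    refine this.congr (fun n => ?_)
    ring
  -- term 1 limit
  have t1 : Filter.Tendsto
      (fun n : ℕ => (∑ i ∈ Finset.range (n+1), (i:ℂ)^j * ε i) / (n:ℂ)^(j+1))
      Filter.atTop (nhds 0) := by
    rw [tendsto_zero_iff_norm_tendsto_zero]
    have hnε : Filter.Tendsto (fun i => ‖ε i‖) Filter.atTop (nhds 0) := by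
      simpa using hε.norm
    have hces := cesaro_succ (fun i => ‖ε i‖) hnε
    refine squeeze_zero_norm' ?_ hces
    filter_upwards [Filter.eventually_ge_atTop 1] with n hn
    have hn' : (0:ℝ) < (n:ℝ) := by exact_mod_cast hn
    rw [norm_norm, norm_div]
    have hbound : ‖∑ i ∈ Finset.range (n+1), (i:ℂ)^j * ε i‖
        ≤ (n:ℝ)^j * ∑ i ∈ Finset.range (n+1), ‖ε i‖ := by
      calc ‖∑ i ∈ Finset.range (n+1), (i:ℂ)^j * ε i‖
          ≤ ∑ i ∈ Finset.range (n+1), ‖(i:ℂ)^j * ε i‖ := norm_sum_le _ _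
      _ ≤ ∑ i ∈ Finset.range (n+1), (n:ℝ)^j * ‖ε i‖ := by
          refine Finset.sum_le_sum (fun i hi => ?_)
          rw [norm_mul]
          have h1 : ‖((i:ℂ))^j‖ = (i:ℝ)^j := by
            rw [norm_pow]; norm_num
          rw [h1]
          have h2 : (i:ℝ)^j ≤ (n:ℝ)^j := by
            gcongr
            exact_mod_cast Nat.lt_succ_iff.mp (Finset.mem_range.mp hi)
          exact mul_le_mul_of_nonneg_right h2 (norm_nonneg _)
      _ = (n:ℝ)^j * ∑ i ∈ Finset.range (n+1), ‖ε i‖ := by rw [Finset.mul_sum]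
    have hnorm_pow : ‖((n:ℂ))^(j+1)‖ = (n:ℝ)^(j+1) := by
      rw [norm_pow]; norm_num
    rw [hnorm_pow]
    have hεsum_nonneg : (0:ℝ) ≤ ∑ i ∈ Finset.range (n+1), ‖ε i‖ :=
      Finset.sum_nonneg (fun i _ => norm_nonneg _)
    calc ‖∑ i ∈ Finset.range (n+1), (i:ℂ)^j * ε i‖ / (n:ℝ)^(j+1)
        ≤ ((n:ℝ)^j * ∑ i ∈ Finset.range (n+1), ‖ε i‖) / (n:ℝ)^(j+1) := by
          gcongr
    _ = (∑ i ∈ Finset.range (n+1), ‖ε i‖) / (n:ℝ) := by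
          rw [pow_succ]
          field_simp
  -- term 3 limit
  have t3 : Filter.Tendsto (fun n : ℕ => (u 0 - f 0) / (n:ℂ)^(j+1)) Filter.atTop (nhds 0) := by
    refine squeeze_zero_norm' (a := fun n : ℕ => ‖u 0 - f 0‖ / (n:ℝ)) ?_ ?_
    · filter_upwards [Filter.eventually_ge_atTop 1] with n hn
      have hn' : (1:ℝ) ≤ (n:ℝ) := by exact_mod_cast hn
      rw [norm_div]
      have hnorm_pow : ‖((n:ℂ))^(j+1)‖ = (n:ℝ)^(j+1) := by rw [norm_pow]; norm_num
      rw [hnorm_pow]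
      have hle : (n:ℝ) ≤ (n:ℝ)^(j+1) := by
        calc (n:ℝ) = (n:ℝ)^1 := (pow_one _).symm
        _ ≤ (n:ℝ)^(j+1) := pow_le_pow_right₀ hn' (by omega)
      exact div_le_div_of_nonneg_left (norm_nonneg _) (by linarith) hle
    · have := (tendsto_one_div_atTop_nhds_zero_nat : Filter.Tendsto (fun n : ℕ => 1/(n:ℝ)) Filter.atTop (nhds 0))
      have h2 := this.const_mul ‖u 0 - f 0‖
      rw [mul_zero] at h2
      refine h2.congr (fun n => ?_)
      field_simp
  have := (t1.add t2).add t3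
  rw [zero_add, add_zero] at this
  refine this.congr (fun n => ?_)
  rw [hsplit n]
  ring

set_option maxHeartbeats 1000000 in
lemma lemmaA (a : ℂ) (ha : 1 < ‖a‖) (z : ℕ → ℂ) (hb : BoundedSeq (Da a z)) :
    ∃ L : ℂ, Filter.Tendsto (fun n : ℕ => z n / a ^ n) Filter.atTop (nhds L)
      ∧ (L = 0 → BoundedSeq z) := by
  obtain ⟨M, hM0, hM⟩ := hb
  have ha0 : a ≠ 0 := by
    intro h; rw [h] at ha; simp at ha; linarith
  set r : ℝ := ‖a‖⁻¹ with hrdef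
  have hr0 : 0 < r := by positivity
  have hr1 : r < 1 := inv_lt_one_of_one_lt₀ ha
  set c : ℕ → ℂ := fun i => Da a z i / a ^ i with hcdef
  have hc : ∀ i, ‖c i‖ ≤ M * r ^ i := by
    intro i
    rw [hcdef]
    simp only [norm_div, norm_pow]
    rw [div_eq_mul_inv, ← inv_pow]
    exact mul_le_mul_of_nonneg_right (hM i) (by positivity)
  have hgeo : Summable (fun i : ℕ => M * r ^ i) :=
    (summable_geometric_of_lt_one hr0.le hr1).mul_left M
  have hsum : Summable c := Summable.of_norm_bounded hgeo hc
  have hnorm : Summable (fun i => ‖c i‖) :=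
    Summable.of_nonneg_of_le (fun i => norm_nonneg _) hc hgeo
  refine ⟨∑' i, c i, ?_, ?_⟩
  · have h1 := hsum.hasSum.tendsto_sum_nat
    have h2 := h1.comp (Filter.tendsto_add_atTop_nat 1)
    refine h2.congr (fun n => ?_)
    show ∑ i ∈ Finset.range (n+1), c i = z n / a ^ n
    rw [solve_Da a ha0 z n]
    rw [mul_comm, mul_div_assoc, div_self (pow_ne_zero _ ha0), mul_one]
  · intro hL
    have hr1' : (0:ℝ) < 1 - r := by linarith
    refine ⟨M * r * (1-r)⁻¹, by positivity, fun n => ?_⟩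
    have htail := Summable.sum_add_tsum_nat_add (f := c) (n+1) hsum
    rw [hL] at htail
    have hpart : ∑ i ∈ Finset.range (n+1), c i = -∑' i, c (i + (n+1)) := by
      linear_combination htail
    have hz : z n = a ^ n * ∑ i ∈ Finset.range (n+1), c i := solve_Da a ha0 z n
    have hbound : ‖∑' i, c (i + (n+1))‖ ≤ M * r ^ (n+1) * (1-r)⁻¹ := by
      have hshift : Summable (fun i => ‖c (i + (n+1))‖) :=
        (summable_nat_add_iff (n+1)).mpr hnorm
      have hshiftg : Summable (fun i : ℕ => M * r ^ (n+1) * r ^ i) :=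
        (summable_geometric_of_lt_one hr0.le hr1).mul_left _
      calc ‖∑' i, c (i + (n+1))‖ ≤ ∑' i, ‖c (i + (n+1))‖ := norm_tsum_le_tsum_norm hshift
      _ ≤ ∑' i : ℕ, M * r ^ (n+1) * r ^ i := by
          refine Summable.tsum_le_tsum (fun i => ?_) hshift hshiftg
          calc ‖c (i + (n+1))‖ ≤ M * r ^ (i + (n+1)) := hc _
          _ = M * r ^ (n+1) * r ^ i := by rw [pow_add]; ring
      _ = M * r ^ (n+1) * (1-r)⁻¹ := by
          rw [tsum_mul_left, tsum_geometric_of_lt_one hr0.le hr1]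
    calc ‖z n‖ = ‖a‖ ^ n * ‖∑ i ∈ Finset.range (n+1), c i‖ := by
          rw [hz, norm_mul, norm_pow]
    _ = ‖a‖ ^ n * ‖∑' i, c (i + (n+1))‖ := by rw [hpart, norm_neg]
    _ ≤ ‖a‖ ^ n * (M * r ^ (n+1) * (1-r)⁻¹) :=
        mul_le_mul_of_nonneg_left hbound (by positivity)
    _ = M * r * (1-r)⁻¹ := by
        have h5 : ‖a‖ ^ n * r ^ n = 1 := by
          rw [hrdef, inv_pow, mul_inv_cancel₀ (by positivity)]
        rw [pow_succ']
        calc ‖a‖ ^ n * (M * (r * r ^ n) * (1-r)⁻¹)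
            = (‖a‖ ^ n * r ^ n) * (M * r * (1-r)⁻¹) := by ring
        _ = M * r * (1-r)⁻¹ := by rw [h5, one_mul]

theorem stmt0 (x : ℕ → ℂ) (a : ℂ) (ha : 1 < ‖a‖) (k : ℕ)
    (hk : ¬ BoundedSeq ((Da a)^[k] x)) (hk1 : BoundedSeq ((Da a)^[k + 1] x)) :
    ∃ L : ℂ, L ≠ 0 ∧
      Filter.Tendsto (fun n : ℕ => x n / ((n : ℂ) ^ k * a ^ n)) Filter.atTop (nhds L) := by
  have ha0 : a ≠ 0 := by
    intro h; rw [h] at ha; simp at ha; linarith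
  have hstep : ∀ m : ℕ, m ≤ k → ∃ L : ℂ, L ≠ 0 ∧
      Filter.Tendsto (fun n : ℕ => (Da a)^[k-m] x n / ((n:ℂ)^m * a^n))
        Filter.atTop (nhds L) := by
    intro m
    induction m with
    | zero =>
      intro _
      have hDa : Da a ((Da a)^[k] x) = (Da a)^[k+1] x :=
        (Function.iterate_succ_apply' (Da a) k x).symm
      obtain ⟨L0, hL0t, hL0z⟩ := lemmaA a ha ((Da a)^[k] x) (by rw [hDa]; exact hk1)
      refine ⟨L0, fun h => hk (hL0z h), ?_⟩
      refine hL0t.congr (fun n => ?_)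
      simp
    | succ m ih =>
      intro hm
      obtain ⟨L, hL, ht⟩ := ih (by omega)
      set z : ℕ → ℂ := (Da a)^[k-m] x with hz
      set x' : ℕ → ℂ := (Da a)^[k-(m+1)] x with hx'
      have hDx' : Da a x' = z := by
        rw [hx', hz, ← Function.iterate_succ_apply' (Da a) (k-(m+1)) x]
        congr 1
        omega
      have hu : Filter.Tendsto (fun n : ℕ => (z n / a ^ n) / (n:ℂ)^m)
          Filter.atTop (nhds L) := by
        refine ht.congr (fun n => ?_)
        rw [div_div, mul_comm]
      have hsl := sum_lemma m (fun i => z i / a ^ i) L hu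
      refine ⟨L / ((m:ℂ)+1), ?_, ?_⟩
      · apply div_ne_zero hL
        have h1 : ((m+1:ℕ):ℂ) ≠ 0 := Nat.cast_ne_zero.mpr (Nat.succ_ne_zero m)
        push_cast at h1
        exact h1
      · refine hsl.congr (fun n => ?_)
        have hsolve : x' n = a ^ n * ∑ i ∈ Finset.range (n+1), Da a x' i / a ^ i :=
          solve_Da a ha0 x' n
        rw [hDx'] at hsolve
        rw [← div_div, div_right_comm]
        congr 1
        rw [hsolve, mul_comm, mul_div_assoc, div_self (pow_ne_zero _ ha0), mul_one]
  obtain ⟨L, hL, ht⟩ := hstep k le_rfl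
  exact ⟨L, hL, by simpa using ht⟩
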